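/- Let A be a commutative ring, l ≥ 1, and R = A[X_1, …, X_l]. For a nonempty subset σ ⊆ {1,…,l} let I_σ be the ideal of R generated by {X_s : s ∈ σ}. Consider the complex 0 → R/(X_1⋯X_l) → ⨁_{|σ|=1} R/I_σ → ⨁_{|σ|=2} R/I_σ → … → R/I_{{1,…,l}} → 0, where the first map is induced by the natural quotient maps (which are defined since X_1⋯X_l ∈ I_σ for every nonempty σ), and where the differential from the |σ|=i level to the |σ|=i+1 level sends a family (f_σ)_{|σ|=i} to the family whose component at an (i+1)-element subset τ is Σ_{γ∈τ} (−1)^{pos(γ∈τ)} f̄_{τ∖{γ}}, with f̄_{τ∖{γ}} the image of f_{τ∖{γ}} under the natural projection R/I_{τ∖{γ}} → R/I_τ and pos(γ∈τ) the position of γ in the increasing enumeration of τ. Then this complex is exact in every degree. -/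

import Mathlib

/-- The ideal `I_σ` of `R = A[X_1,…,X_l]` generated by the variables `X_s`, `s ∈ σ`. -/
noncomputable def varIdeal (A : Type*) [CommRing A] (l : ℕ) (σ : Finset (Fin l)) :
    Ideal (MvPolynomial (Fin l) A) :=
  Ideal.span (MvPolynomial.X '' (σ : Set (Fin l)))

theorem varIdeal_mono (A : Type*) [CommRing A] (l : ℕ) {σ τ : Finset (Fin l)}
    (h : σ ⊆ τ) : varIdeal A l σ ≤ varIdeal A l τ :=
  Ideal.span_mono (Set.image_mono (f := MvPolynomial.X) (Finset.coe_subset.2 h))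

/-- `X_1 ⋯ X_l ∈ I_σ` for every nonempty `σ`, so the natural quotient map
`R/(X_1⋯X_l) → R/I_σ` is defined. -/
theorem prod_X_mem_varIdeal (A : Type*) [CommRing A] (l : ℕ)
    {σ : Finset (Fin l)} (hσ : σ.Nonempty) :
    Ideal.span {∏ i : Fin l, MvPolynomial.X i} ≤ varIdeal A l σ := by
  obtain ⟨s, hs⟩ := hσ
  rw [Ideal.span_le, Set.singleton_subset_iff]
  have hX : MvPolynomial.X s ∈ varIdeal A l σ :=
    Ideal.subset_span (Set.mem_image_of_mem _ (Finset.mem_coe.2 hs))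
  rw [← Finset.mul_prod_erase Finset.univ MvPolynomial.X (Finset.mem_univ s)]
  exact Ideal.mul_mem_right _ _ hX

/-- The degree-`i` term `⨁_{|σ|=i} R/I_σ` of the Čech complex. -/
abbrev CechQTerm (A : Type*) [CommRing A] (l : ℕ) (i : ℕ) : Type _ :=
  (σ : {s : Finset (Fin l) // s.card = i}) → MvPolynomial (Fin l) A ⧸ varIdeal A l σ.1

/-- The position `pos(γ ∈ τ)` of `γ` in the increasing enumeration of `τ`. -/
def cechPos {J : Type*} [LinearOrder J] (τ : Finset J) (γ : J) : ℕ :=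
  (τ.filter fun x => x ≤ γ).card

/-- The Čech differential: the component at an `(i+1)`-element subset `τ` of the image
of a family `(f_σ)_{|σ|=i}` is `Σ_{γ∈τ} (−1)^{pos(γ∈τ)} f̄_{τ∖{γ}}`, where `f̄_{τ∖{γ}}`
is the image of `f_{τ∖{γ}}` under the natural projection `R/I_{τ∖{γ}} → R/I_τ`. -/
noncomputable def cechQD (A : Type*) [CommRing A] (l : ℕ) (i : ℕ) (f : CechQTerm A l i) :
    CechQTerm A l (i + 1) :=
  fun τ => ∑ γ ∈ τ.1.attach,
    ((-1 : ℤ) ^ cechPos τ.1 γ.1) •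
      (Ideal.Quotient.factor (S := varIdeal A l (τ.1.erase γ.1)) (T := varIdeal A l τ.1)
          (varIdeal_mono A l (Finset.erase_subset γ.1 τ.1))
        (f ⟨τ.1.erase γ.1, by rw [Finset.card_erase_of_mem γ.2, τ.2]; rfl⟩))

/-- The first map `R/(X_1⋯X_l) → ⨁_{|σ|=1} R/I_σ`, induced by the natural quotient
maps. -/
noncomputable def cechQAug (A : Type*) [CommRing A] (l : ℕ)
    (x : MvPolynomial (Fin l) A ⧸
      (Ideal.span {∏ i : Fin l, MvPolynomial.X i} : Ideal (MvPolynomial (Fin l) A))) :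
    CechQTerm A l 1 :=
  fun σ =>
    Ideal.Quotient.factor
      (prod_X_mem_varIdeal A l (Finset.card_pos.mp (by rw [σ.2]; exact Nat.one_pos))) x

/-! ### Auxiliary infrastructure -/

open MvPolynomial Finset

section Aux

variable {A : Type*} [CommRing A] {l : ℕ}

/-- The monomial `m` involves no variable from `σ`. -/
def MDisj (σ : Finset (Fin l)) (m : Fin l →₀ ℕ) : Prop := ∀ s ∈ σ, m s = 0

lemma MDisj.mono {σ τ : Finset (Fin l)} {m : Fin l →₀ ℕ} (h : MDisj τ m) (hst : σ ⊆ τ) :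
    MDisj σ m := fun s hs => h s (hst hs)

lemma coeff_eq_zero_of_mem_varIdeal {σ : Finset (Fin l)} {m : Fin l →₀ ℕ}
    (hm : MDisj σ m) {p : MvPolynomial (Fin l) A} (hp : p ∈ varIdeal A l σ) :
    coeff m p = 0 := by
  rw [varIdeal, mem_ideal_span_X_image] at hp
  by_contra h
  obtain ⟨i, hi, hne⟩ := hp m (mem_support_iff.2 h)
  exact hne (hm i hi)

lemma mem_varIdeal_of_coeff {σ : Finset (Fin l)} {p : MvPolynomial (Fin l) A}
    (h : ∀ m, MDisj σ m → coeff m p = 0) : p ∈ varIdeal A l σ := by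
  rw [varIdeal, mem_ideal_span_X_image]
  intro m hm
  by_contra hc
  push_neg at hc
  have : MDisj σ m := fun s hs => by have := hc s hs; omega
  exact mem_support_iff.1 hm (h m this)

/-- The `m`-th coefficient of the canonical representative of `x : R/I_σ`;
well-behaved only for `m` disjoint from `σ`. -/
noncomputable def qcoeff (σ : Finset (Fin l)) (m : Fin l →₀ ℕ)
    (x : MvPolynomial (Fin l) A ⧸ varIdeal A l σ) : A :=
  coeff m (Quotient.out x)

lemma qcoeff_mk {σ : Finset (Fin l)} {m : Fin l →₀ ℕ} (hm : MDisj σ m)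
    (p : MvPolynomial (Fin l) A) :
    qcoeff σ m (Ideal.Quotient.mk (varIdeal A l σ) p) = coeff m p := by
  have h1 : Ideal.Quotient.mk (varIdeal A l σ)
      (Quotient.out (Ideal.Quotient.mk (varIdeal A l σ) p)) =
      Ideal.Quotient.mk (varIdeal A l σ) p := Quotient.out_eq _
  rw [Ideal.Quotient.eq] at h1
  have := coeff_eq_zero_of_mem_varIdeal hm h1
  rw [coeff_sub] at this
  unfold qcoeff
  exact sub_eq_zero.mp this

lemma qcoeff_ext {σ : Finset (Fin l)} {x y : MvPolynomial (Fin l) A ⧸ varIdeal A l σ}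
    (h : ∀ m, MDisj σ m → qcoeff σ m x = qcoeff σ m y) : x = y := by
  obtain ⟨p, rfl⟩ := Ideal.Quotient.mk_surjective x
  obtain ⟨q, rfl⟩ := Ideal.Quotient.mk_surjective y
  rw [Ideal.Quotient.eq]
  refine mem_varIdeal_of_coeff fun m hm => ?_
  have := h m hm
  rw [qcoeff_mk hm, qcoeff_mk hm] at this
  rw [coeff_sub, this, sub_self]

lemma qcoeff_zero {σ : Finset (Fin l)} {m : Fin l →₀ ℕ} (hm : MDisj σ m) :
    qcoeff σ m (0 : MvPolynomial (Fin l) A ⧸ varIdeal A l σ) = 0 := by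
  have : (0 : MvPolynomial (Fin l) A ⧸ varIdeal A l σ) = Ideal.Quotient.mk _ 0 := by simp
  rw [this, qcoeff_mk hm, coeff_zero]

lemma qcoeff_add {σ : Finset (Fin l)} {m : Fin l →₀ ℕ} (hm : MDisj σ m)
    (x y : MvPolynomial (Fin l) A ⧸ varIdeal A l σ) :
    qcoeff σ m (x + y) = qcoeff σ m x + qcoeff σ m y := by
  obtain ⟨p, rfl⟩ := Ideal.Quotient.mk_surjective x
  obtain ⟨q, rfl⟩ := Ideal.Quotient.mk_surjective y
  rw [← map_add, qcoeff_mk hm, qcoeff_mk hm, qcoeff_mk hm, coeff_add]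

lemma qcoeff_zsmul {σ : Finset (Fin l)} {m : Fin l →₀ ℕ} (hm : MDisj σ m)
    (n : ℤ) (x : MvPolynomial (Fin l) A ⧸ varIdeal A l σ) :
    qcoeff σ m (n • x) = n • qcoeff σ m x := by
  obtain ⟨p, rfl⟩ := Ideal.Quotient.mk_surjective x
  rw [← map_zsmul (Ideal.Quotient.mk (varIdeal A l σ)), qcoeff_mk hm, qcoeff_mk hm,
    coeff_smul]

lemma qcoeff_sum {σ : Finset (Fin l)} {m : Fin l →₀ ℕ} (hm : MDisj σ m)
    {ι : Type*} (s : Finset ι) (f : ι → MvPolynomial (Fin l) A ⧸ varIdeal A l σ) :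
    qcoeff σ m (∑ i ∈ s, f i) = ∑ i ∈ s, qcoeff σ m (f i) := by
  classical
  induction s using Finset.cons_induction with
  | empty => simpa using qcoeff_zero hm
  | cons a s ha ih => rw [Finset.sum_cons, Finset.sum_cons, qcoeff_add hm, ih]

lemma qcoeff_factor {σ τ : Finset (Fin l)} (hst : varIdeal A l σ ≤ varIdeal A l τ)
    {m : Fin l →₀ ℕ} (hmσ : MDisj σ m) (hmτ : MDisj τ m)
    (x : MvPolynomial (Fin l) A ⧸ varIdeal A l σ) :
    qcoeff τ m (Ideal.Quotient.factor hst x) = qcoeff σ m x := by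
  obtain ⟨p, rfl⟩ := Ideal.Quotient.mk_surjective x
  rw [Ideal.Quotient.factor_mk, qcoeff_mk hmτ, qcoeff_mk hmσ]

/-! ### Position lemmas -/

lemma cechPos_insert {τ : Finset (Fin l)} {v : Fin l} (hv : v ∉ τ) (γ : Fin l) :
    cechPos (insert v τ) γ = cechPos τ γ + if v ≤ γ then 1 else 0 := by
  classical
  unfold cechPos
  rw [Finset.filter_insert]
  split
  · rw [Finset.card_insert_of_notMem (fun h => hv (Finset.mem_of_mem_filter _ h))]
  · rw [add_zero]

/-- Total-function version of the level-`i` coefficients of a cochain. -/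
noncomputable def tcoeff {i : ℕ} (f : CechQTerm A l i) (σ : Finset (Fin l))
    (m : Fin l →₀ ℕ) : A :=
  if h : σ.card = i then qcoeff σ m (f ⟨σ, h⟩) else 0

lemma tcoeff_eq {i : ℕ} (f : CechQTerm A l i) {σ : Finset (Fin l)} (h : σ.card = i)
    (m : Fin l →₀ ℕ) : tcoeff f σ m = qcoeff σ m (f ⟨σ, h⟩) := by
  rw [tcoeff, dif_pos h]

/-- Coefficient formula for the Čech differential. -/
lemma qcoeff_cechQD {i : ℕ} (f : CechQTerm A l i)
    (τ : {s : Finset (Fin l) // s.card = i + 1}) {m : Fin l →₀ ℕ} (hm : MDisj τ.1 m) :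
    qcoeff τ.1 m (cechQD A l i f τ)
      = ∑ γ ∈ τ.1, ((-1 : ℤ) ^ cechPos τ.1 γ) • tcoeff f (τ.1.erase γ) m := by
  rw [cechQD, qcoeff_sum hm]
  rw [← Finset.sum_attach τ.1 (fun γ => ((-1 : ℤ) ^ cechPos τ.1 γ) • tcoeff f (τ.1.erase γ) m)]
  refine Finset.sum_congr rfl fun γ _ => ?_
  rw [qcoeff_zsmul hm, qcoeff_factor _ (hm.mono (Finset.erase_subset _ _)) hm,
    tcoeff_eq f (by rw [Finset.card_erase_of_mem γ.2, τ.2]; rfl)]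

/-! ### Sign lemmas -/

lemma cechPos_erase {υ : Finset (Fin l)} {γ : Fin l} (hγ : γ ∈ υ) (δ : Fin l) :
    cechPos υ δ = cechPos (υ.erase γ) δ + if γ ≤ δ then 1 else 0 := by
  conv_lhs => rw [← Finset.insert_erase hγ]
  exact cechPos_insert (Finset.notMem_erase γ υ) δ

lemma sgn_insert {τ : Finset (Fin l)} {v : Fin l} (hv : v ∉ τ) (γ : Fin l) :
    ((-1 : ℤ) ^ cechPos (insert v τ) γ)
      = (-1) ^ cechPos τ γ * (if v ≤ γ then -1 else 1) := by
  rw [cechPos_insert hv, pow_add]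
  split <;> simp

lemma sgn_erase {υ : Finset (Fin l)} {γ : Fin l} (hγ : γ ∈ υ) (δ : Fin l) :
    ((-1 : ℤ) ^ cechPos (υ.erase γ) δ)
      = (-1) ^ cechPos υ δ * (if γ ≤ δ then -1 else 1) := by
  rw [cechPos_erase hγ δ, pow_add]
  split <;> ring

lemma sgn_mul_self (τ : Finset (Fin l)) (γ : Fin l) :
    ((-1 : ℤ) ^ cechPos τ γ) * (-1) ^ cechPos τ γ = 1 := by
  rw [← pow_add]
  exact Even.neg_one_pow ⟨cechPos τ γ, rfl⟩

lemma sign_cancel {υ : Finset (Fin l)} {γ δ : Fin l} (hγ : γ ∈ υ) (hδ : δ ∈ υ)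
    (hne : γ ≠ δ) :
    (-1 : ℤ) ^ cechPos υ γ * (-1) ^ cechPos (υ.erase γ) δ
      = -((-1) ^ cechPos υ δ * (-1) ^ cechPos (υ.erase δ) γ) := by
  rw [sgn_erase hγ δ, sgn_erase hδ γ]
  rcases hne.lt_or_gt with h | h
  · rw [if_pos h.le, if_neg (not_le.2 h)]; ring
  · rw [if_neg (not_le.2 h), if_pos h.le]; ring

lemma sign_homotopy {τ : Finset (Fin l)} {γ v : Fin l} (hγ : γ ∈ τ) (hv : v ∉ τ) :
    (-1 : ℤ) ^ cechPos τ γ * (-1) ^ cechPos (insert v (τ.erase γ)) v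
      = -((-1) ^ cechPos (insert v τ) v * (-1) ^ cechPos (insert v τ) γ) := by
  have hvγ : v ≠ γ := fun h => hv (h ▸ hγ)
  have hins : insert v τ = insert γ (insert v (τ.erase γ)) := by
    rw [Finset.insert_comm, Finset.insert_erase hγ]
  have hγnot : γ ∉ insert v (τ.erase γ) := by
    simp [Finset.mem_insert, hvγ.symm]
  have h1 : ((-1 : ℤ) ^ cechPos (insert v τ) γ)
      = (-1) ^ cechPos τ γ * (if v ≤ γ then -1 else 1) := sgn_insert hv γ
  have h2 : ((-1 : ℤ) ^ cechPos (insert v τ) v)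
      = (-1) ^ cechPos (insert v (τ.erase γ)) v * (if γ ≤ v then -1 else 1) := by
    rw [hins]; exact sgn_insert hγnot v
  rw [h1, h2]
  rcases hvγ.lt_or_gt with h | h
  · rw [if_neg (not_le.2 h), if_pos h.le]; ring
  · rw [if_pos h.le, if_neg (not_le.2 h)]; ring

lemma cechPos_singleton (a γ : Fin l) :
    cechPos {a} γ = if a ≤ γ then 1 else 0 := by
  unfold cechPos
  rw [Finset.filter_singleton]
  split <;> simp

/-! ### Restriction and representatives -/

/-- Restriction of a polynomial to monomials satisfying `P`. -/
noncomputable def Rst (P : (Fin l →₀ ℕ) → Prop) [DecidablePred P]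
    (p : MvPolynomial (Fin l) A) : MvPolynomial (Fin l) A :=
  ∑ m ∈ p.support.filter P, monomial m (coeff m p)

lemma coeff_Rst (P : (Fin l →₀ ℕ) → Prop) [DecidablePred P]
    (p : MvPolynomial (Fin l) A) (m : Fin l →₀ ℕ) :
    coeff m (Rst P p) = if P m then coeff m p else 0 := by
  classical
  rw [Rst, coeff_sum]
  simp_rw [coeff_monomial]
  rw [Finset.sum_ite_eq' (p.support.filter P) m (fun m' => coeff m' p)]
  by_cases hP : P m
  · by_cases hs : m ∈ p.support
    · simp [hP, hs]
    · simp [hP, hs, notMem_support_iff.1 hs]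
  · simp [hP]

/-- A (total-function) canonical representative of the component of a cochain at `σ`. -/
noncomputable def tout {i : ℕ} (f : CechQTerm A l i) (σ : Finset (Fin l)) :
    MvPolynomial (Fin l) A :=
  if h : σ.card = i then Quotient.out (f ⟨σ, h⟩) else 0

lemma coeff_tout {i : ℕ} (f : CechQTerm A l i) (σ : Finset (Fin l)) (m : Fin l →₀ ℕ) :
    coeff m (tout f σ) = tcoeff f σ m := by
  unfold tout tcoeff
  split
  · rfl
  · rw [coeff_zero]

/-- The set of variables not occurring in `m`. -/
def ZSet (m : Fin l →₀ ℕ) : Finset (Fin l) :=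
  Finset.univ.filter fun s => m s = 0

lemma subset_ZSet {σ : Finset (Fin l)} {m : Fin l →₀ ℕ} (h : MDisj σ m) : σ ⊆ ZSet m :=
  fun s hs => Finset.mem_filter.2 ⟨Finset.mem_univ s, h s hs⟩

lemma mem_prod_span {r : MvPolynomial (Fin l) A}
    (h : ∀ m ∈ r.support, ∀ s : Fin l, m s ≠ 0) :
    r ∈ Ideal.span {∏ i : Fin l, (X i : MvPolynomial (Fin l) A)} := by
  classical
  rw [Ideal.mem_span_singleton']
  set u : Fin l →₀ ℕ := Finsupp.equivFunOnFinite.symm 1 with hu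
  have hprod : (∏ i : Fin l, (X i : MvPolynomial (Fin l) A)) = monomial u 1 := by
    rw [← prod_X_pow_eq_monomial]
    rw [Finset.prod_congr ?_ (fun x _ => ?_)]
    · ext s
      simp [hu, Finsupp.mem_support_iff]
    · simp [hu]
  refine ⟨∑ m ∈ r.support, monomial (m - u) (coeff m r), ?_⟩
  rw [hprod, Finset.sum_mul]
  conv_rhs => rw [← support_sum_monomial_coeff r]
  refine Finset.sum_congr rfl fun m hm => ?_
  rw [monomial_mul, mul_one]
  have huu : m - u + u = m := by
    ext s
    have h1 : m s ≠ 0 := h m hm s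
    have h2 : u s = 1 := by simp [hu]
    simp only [Finsupp.add_apply, Finsupp.tsub_apply, h2]
    omega
  rw [huu]

lemma pair_sign_sum {a b : Fin l} (hab : a ≠ b) :
    ((-1 : ℤ) ^ cechPos {a, b} a) + (-1 : ℤ) ^ cechPos {a, b} b = 0 := by
  have hnb : a ∉ ({b} : Finset (Fin l)) := by simp [hab]
  have h1 : cechPos ({a, b} : Finset (Fin l)) a
      = (if b ≤ a then 1 else 0) + if a ≤ a then 1 else 0 := by
    show cechPos (insert a {b}) a = _
    rw [cechPos_insert hnb, cechPos_singleton]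
  have h2 : cechPos ({a, b} : Finset (Fin l)) b
      = (if b ≤ b then 1 else 0) + if a ≤ b then 1 else 0 := by
    show cechPos (insert a {b}) b = _
    rw [cechPos_insert hnb, cechPos_singleton]
  rcases hab.lt_or_gt with h | h
  · rw [h1, h2, if_pos le_rfl, if_pos le_rfl, if_neg (not_le.2 h), if_pos h.le]
    norm_num
  · rw [h1, h2, if_pos le_rfl, if_pos le_rfl, if_pos h.le, if_neg (not_le.2 h)]
    norm_num

/-- The homotopy polynomial: canonical representative of the image of a cochain under the
contracting homotopy (vertex chosen as the minimal variable not occurring in a monomial). -/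
noncomputable def hpoly {i : ℕ} (F : CechQTerm A l i) (σ : Finset (Fin l)) :
    MvPolynomial (Fin l) A :=
  ∑ v : Fin l, ((-1 : ℤ) ^ cechPos (insert v σ) v) •
    Rst (fun m => (ZSet m).min = (v : WithTop (Fin l))) (tout F (insert v σ))

lemma coeff_hpoly {i : ℕ} (F : CechQTerm A l i) (σ : Finset (Fin l)) {m : Fin l →₀ ℕ}
    (hne : (ZSet m).Nonempty) :
    coeff m (hpoly F σ)
      = ((-1 : ℤ) ^ cechPos (insert ((ZSet m).min' hne) σ) ((ZSet m).min' hne)) •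
        tcoeff F (insert ((ZSet m).min' hne) σ) m := by
  classical
  set v₀ := (ZSet m).min' hne with hv₀
  have hmin : (ZSet m).min = (v₀ : WithTop (Fin l)) := (Finset.coe_min' hne).symm
  rw [hpoly, coeff_sum]
  rw [Finset.sum_eq_single v₀ ?_ ?_]
  · rw [coeff_smul, coeff_Rst, if_pos hmin, coeff_tout]
  · intro v _ hv
    rw [coeff_smul, coeff_Rst, if_neg, smul_zero]
    rw [hmin]
    intro h
    exact hv (WithTop.coe_injective h.symm)
  · intro h
    exact absurd (Finset.mem_univ v₀) h

lemma ZSet_min'_apply {m : Fin l →₀ ℕ} (hne : (ZSet m).Nonempty) :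
    m ((ZSet m).min' hne) = 0 :=
  (Finset.mem_filter.1 ((ZSet m).min'_mem hne)).2

lemma sgn_smul_cancel {τ : Finset (Fin l)} {γ : Fin l} {x y : A}
    (h : ((-1 : ℤ) ^ cechPos τ γ) • x = ((-1 : ℤ) ^ cechPos τ γ) • y) : x = y := by
  calc x = (((-1 : ℤ) ^ cechPos τ γ * (-1) ^ cechPos τ γ) • x) := by
        rw [sgn_mul_self, one_smul]
    _ = ((-1 : ℤ) ^ cechPos τ γ) • (((-1 : ℤ) ^ cechPos τ γ) • x) := by rw [smul_smul]
    _ = ((-1 : ℤ) ^ cechPos τ γ) • (((-1 : ℤ) ^ cechPos τ γ) • y) := by rw [h]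
    _ = (((-1 : ℤ) ^ cechPos τ γ * (-1) ^ cechPos τ γ) • y) := by rw [smul_smul]
    _ = y := by rw [sgn_mul_self, one_smul]

end Aux


/-- Let `A` be a commutative ring, `l ≥ 1`, `R = A[X_1,…,X_l]`, and for a nonempty
`σ ⊆ {1,…,l}` let `I_σ = (X_s : s ∈ σ)`.  Then the Čech complex
`0 → R/(X_1⋯X_l) → ⨁_{|σ|=1} R/I_σ → ⨁_{|σ|=2} R/I_σ → … → R/I_{{1,…,l}} → 0`
(with the signed differentials `cechQD` and the augmentation `cechQAug`) is exact in
every degree. -/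
theorem stmt7 (A : Type*) [CommRing A] (l : ℕ) (hl : 1 ≤ l) :
    Function.Injective (cechQAug A l) ∧
    (∀ x, cechQD A l 1 (cechQAug A l x) = 0) ∧
    (∀ i : ℕ, 1 ≤ i → ∀ f : CechQTerm A l i, cechQD A l (i + 1) (cechQD A l i f) = 0) ∧
    (∀ f : CechQTerm A l 1, cechQD A l 1 f = 0 → ∃ x, cechQAug A l x = f) ∧
    (∀ i : ℕ, 1 ≤ i → ∀ f : CechQTerm A l (i + 1),
      cechQD A l (i + 1) f = 0 → ∃ g : CechQTerm A l i, cechQD A l i g = f) := by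
  classical
  refine ⟨?_, ?_, ?_, ?_, ?_⟩
  · -- injectivity of the augmentation
    intro x y h
    obtain ⟨p, rfl⟩ := Ideal.Quotient.mk_surjective x
    obtain ⟨q, rfl⟩ := Ideal.Quotient.mk_surjective y
    rw [Ideal.Quotient.eq]
    refine mem_prod_span fun m hm s => ?_
    have hs := congrFun h ⟨{s}, Finset.card_singleton s⟩
    simp only [cechQAug, Ideal.Quotient.factor_mk] at hs
    rw [Ideal.Quotient.eq] at hs
    rw [varIdeal, mem_ideal_span_X_image] at hs
    obtain ⟨i, hi, hne⟩ := hs m hm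
    simp only [Finset.coe_singleton, Set.mem_singleton_iff] at hi
    exact hi ▸ hne
  · -- d ∘ aug = 0
    intro x
    obtain ⟨p, rfl⟩ := Ideal.Quotient.mk_surjective x
    funext τ'
    refine qcoeff_ext fun m hm => ?_
    have h0 : (0 : CechQTerm A l 2) τ' = 0 := rfl
    rw [h0, qcoeff_zero hm, qcoeff_cechQD _ τ' hm]
    have hc : ∀ γ ∈ τ'.1, tcoeff (cechQAug A l (Ideal.Quotient.mk _ p)) (τ'.1.erase γ) m
        = coeff m p := by
      intro γ hγ
      have hcard : (τ'.1.erase γ).card = 1 := by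
        rw [Finset.card_erase_of_mem hγ, τ'.2]
      rw [tcoeff_eq _ hcard]
      simp only [cechQAug]
      rw [Ideal.Quotient.factor_mk, qcoeff_mk (hm.mono (Finset.erase_subset _ _))]
    calc ∑ γ ∈ τ'.1, ((-1 : ℤ) ^ cechPos τ'.1 γ) •
            tcoeff (cechQAug A l (Ideal.Quotient.mk _ p)) (τ'.1.erase γ) m
        = ∑ γ ∈ τ'.1, ((-1 : ℤ) ^ cechPos τ'.1 γ) • coeff m p :=
          Finset.sum_congr rfl fun γ hγ => by rw [hc γ hγ]
      _ = (∑ γ ∈ τ'.1, (-1 : ℤ) ^ cechPos τ'.1 γ) • coeff m p := by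
          rw [Finset.sum_smul]
      _ = 0 := by
          obtain ⟨a, b, hab, htau⟩ := Finset.card_eq_two.1 τ'.2
          rw [htau, Finset.sum_pair hab, pair_sign_sum hab, zero_smul]
  · -- d ∘ d = 0
    intro i hi f
    funext υ'
    refine qcoeff_ext fun m hm => ?_
    rw [show (0 : CechQTerm A l (i + 1 + 1)) υ' = 0 from rfl, qcoeff_zero hm,
      qcoeff_cechQD _ υ' hm]
    have hin : ∀ γ ∈ υ'.1, tcoeff (cechQD A l i f) (υ'.1.erase γ) m
        = ∑ δ ∈ υ'.1.erase γ, ((-1 : ℤ) ^ cechPos (υ'.1.erase γ) δ) •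
            tcoeff f ((υ'.1.erase γ).erase δ) m := by
      intro γ hγ
      have hcard : (υ'.1.erase γ).card = i + 1 := by
        rw [Finset.card_erase_of_mem hγ, υ'.2]
        rfl
      rw [tcoeff_eq _ hcard]
      exact qcoeff_cechQD f ⟨υ'.1.erase γ, hcard⟩ (hm.mono (Finset.erase_subset _ _))
    calc ∑ γ ∈ υ'.1, ((-1 : ℤ) ^ cechPos υ'.1 γ) • tcoeff (cechQD A l i f) (υ'.1.erase γ) m
        = ∑ γ ∈ υ'.1, ∑ δ ∈ υ'.1.erase γ,
            (((-1 : ℤ) ^ cechPos υ'.1 γ) * (-1) ^ cechPos (υ'.1.erase γ) δ) •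
              tcoeff f ((υ'.1.erase γ).erase δ) m := by
          refine Finset.sum_congr rfl fun γ hγ => ?_
          rw [hin γ hγ, Finset.smul_sum]
          exact Finset.sum_congr rfl fun δ _ => by rw [smul_smul]
      _ = 0 := by
          rw [Finset.sum_sigma' υ'.1 (fun γ => υ'.1.erase γ)]
          refine Finset.sum_involution (fun p _ => ⟨p.2, p.1⟩) ?_ ?_ ?_ ?_
          · rintro ⟨γ, δ⟩ hp
            have hδe : δ ∈ υ'.1.erase γ := (Finset.mem_sigma.1 hp).2
            have hγ : γ ∈ υ'.1 := (Finset.mem_sigma.1 hp).1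
            have hδ : δ ∈ υ'.1 := Finset.mem_of_mem_erase hδe
            have hne : γ ≠ δ := fun h => (Finset.mem_erase.1 hδe).1 h.symm
            have hset : (υ'.1.erase γ).erase δ = (υ'.1.erase δ).erase γ :=
              Finset.erase_right_comm
            rw [sign_cancel hγ hδ hne, hset, neg_smul, neg_add_cancel]
          · rintro ⟨γ, δ⟩ hp _ heq
            have hδe : δ ∈ υ'.1.erase γ := (Finset.mem_sigma.1 hp).2
            have := (Sigma.mk.inj_iff.1 heq).1
            exact (Finset.mem_erase.1 hδe).1 (this ▸ rfl)
          · rintro ⟨γ, δ⟩ hp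
            have hδe : δ ∈ υ'.1.erase γ := (Finset.mem_sigma.1 hp).2
            have hγ : γ ∈ υ'.1 := (Finset.mem_sigma.1 hp).1
            have hne : δ ≠ γ := (Finset.mem_erase.1 hδe).1
            exact Finset.mem_sigma.2 ⟨Finset.mem_of_mem_erase hδe,
              Finset.mem_erase.2 ⟨hne.symm, hγ⟩⟩
          · rintro ⟨γ, δ⟩ _
            rfl
  · -- exactness at level 1
    intro f hdf
    refine ⟨Ideal.Quotient.mk _ (-(hpoly f ∅)), ?_⟩
    funext σ'
    obtain ⟨σv, hσv⟩ := σ'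
    obtain ⟨t, ht⟩ := Finset.card_eq_one.1 hσv
    subst ht
    refine qcoeff_ext fun m hm => ?_
    have hmt : m t = 0 := hm t (Finset.mem_singleton_self t)
    have hL : qcoeff ({t} : Finset (Fin l)) m
        (cechQAug A l (Ideal.Quotient.mk _ (-(hpoly f ∅))) ⟨{t}, hσv⟩)
        = coeff m (-(hpoly f ∅)) := by
      simp only [cechQAug]
      rw [Ideal.Quotient.factor_mk, qcoeff_mk hm]
    rw [hL]
    have hZne : (ZSet m).Nonempty :=
      ⟨t, Finset.mem_filter.2 ⟨Finset.mem_univ t, hmt⟩⟩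
    set v₀ := (ZSet m).min' hZne with hv₀def
    have hmv₀ : m v₀ = 0 := ZSet_min'_apply hZne
    have hins : insert v₀ (∅ : Finset (Fin l)) = {v₀} := rfl
    have hcoe : coeff m (-(hpoly f ∅)) = tcoeff f {v₀} m := by
      rw [coeff_neg, coeff_hpoly f ∅ hZne]
      have h1 : cechPos (insert v₀ (∅ : Finset (Fin l))) v₀ = 1 := by
        rw [hins, cechPos_singleton, if_pos le_rfl]
      rw [← hv₀def, h1, hins]
      simp
    rw [hcoe]
    have hgoal : qcoeff ({t} : Finset (Fin l)) m (f ⟨{t}, hσv⟩) = tcoeff f {t} m :=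
      (tcoeff_eq f hσv m).symm
    rw [hgoal]
    by_cases hvt : v₀ = t
    · rw [hvt]
    · -- use the cocycle relation on {v₀, t}
      have hnot : v₀ ∉ ({t} : Finset (Fin l)) := by simp [hvt]
      have h2 : ({v₀, t} : Finset (Fin l)).card = 1 + 1 := by
        rw [Finset.card_insert_of_notMem hnot, Finset.card_singleton]
      have hmd : MDisj ({v₀, t} : Finset (Fin l)) m := by
        intro s hs
        rcases Finset.mem_insert.1 hs with rfl | hs
        · exact hmv₀
        · rw [Finset.mem_singleton.1 hs]; exact hmt
      have h0 := congrArg (qcoeff ({v₀, t} : Finset (Fin l)) m)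
        (congrFun hdf ⟨{v₀, t}, h2⟩)
      rw [qcoeff_cechQD f ⟨{v₀, t}, h2⟩ hmd,
        show (0 : CechQTerm A l (1 + 1)) ⟨{v₀, t}, h2⟩ = 0 from rfl, qcoeff_zero hmd] at h0
      have herase1 : ({v₀, t} : Finset (Fin l)).erase v₀ = {t} := Finset.erase_insert hnot
      have herase2 : ({v₀, t} : Finset (Fin l)).erase t = {v₀} := by
        rw [Finset.erase_insert_of_ne hvt, Finset.erase_singleton]
        exact hins
      have hsum : (∑ γ ∈ ({v₀, t} : Finset (Fin l)),
          ((-1 : ℤ) ^ cechPos ({v₀, t} : Finset (Fin l)) γ) •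
            tcoeff f (({v₀, t} : Finset (Fin l)).erase γ) m)
          = ((-1 : ℤ) ^ cechPos ({v₀, t} : Finset (Fin l)) v₀) • tcoeff f {t} m
            + ((-1 : ℤ) ^ cechPos ({v₀, t} : Finset (Fin l)) t) • tcoeff f {v₀} m := by
        rw [Finset.sum_pair hvt, herase1, herase2]
      rw [hsum] at h0
      have hsgnt : ((-1 : ℤ) ^ cechPos ({v₀, t} : Finset (Fin l)) t)
          = -((-1 : ℤ) ^ cechPos ({v₀, t} : Finset (Fin l)) v₀) :=
        eq_neg_of_add_eq_zero_right (pair_sign_sum hvt)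
      rw [hsgnt, neg_smul, ← sub_eq_add_neg, sub_eq_zero] at h0
      exact (sgn_smul_cancel h0).symm
  · -- exactness at higher levels
    intro i hi F hdF
    refine ⟨fun σ' => Ideal.Quotient.mk _ (hpoly F σ'.1), ?_⟩
    funext τ'
    obtain ⟨τ, hτ⟩ := τ'
    refine qcoeff_ext fun m hm => ?_
    rw [qcoeff_cechQD _ ⟨τ, hτ⟩ hm]
    have hτne : τ.Nonempty := Finset.card_pos.1 (by rw [hτ]; omega)
    have hZne : (ZSet m).Nonempty := hτne.mono (subset_ZSet hm)
    set v₀ := (ZSet m).min' hZne with hv₀def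
    have hmv₀ : m v₀ = 0 := ZSet_min'_apply hZne
    have hG : ∀ γ ∈ τ, tcoeff (fun σ' : {s : Finset (Fin l) // s.card = i} =>
        Ideal.Quotient.mk (varIdeal A l σ'.1) (hpoly F σ'.1)) (τ.erase γ) m
        = ((-1 : ℤ) ^ cechPos (insert v₀ (τ.erase γ)) v₀) •
            tcoeff F (insert v₀ (τ.erase γ)) m := by
      intro γ hγ
      have hcard : (τ.erase γ).card = i := by
        rw [Finset.card_erase_of_mem hγ, hτ]; omega
      rw [tcoeff_eq _ hcard]
      show qcoeff (τ.erase γ) m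
        (Ideal.Quotient.mk (varIdeal A l (τ.erase γ)) (hpoly F (τ.erase γ))) = _
      rw [qcoeff_mk (hm.mono (Finset.erase_subset _ _)), coeff_hpoly F _ hZne, ← hv₀def]
    rw [Finset.sum_congr rfl (fun γ hγ => by rw [hG γ hγ, smul_smul])]
    by_cases hv₀τ : v₀ ∈ τ
    · rw [Finset.sum_eq_single_of_mem v₀ hv₀τ ?_]
      · rw [Finset.insert_erase hv₀τ, sgn_mul_self, one_smul, tcoeff_eq F hτ]
      · intro γ hγ hne
        have hv₀e : v₀ ∈ τ.erase γ := Finset.mem_erase.2 ⟨Ne.symm hne, hv₀τ⟩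
        rw [Finset.insert_eq_self.2 hv₀e]
        have hne' : (τ.erase γ).card ≠ i + 1 := by
          rw [Finset.card_erase_of_mem hγ, hτ]; omega
        rw [tcoeff, dif_neg hne', smul_zero]
    · have hυcard : (insert v₀ τ).card = i + 1 + 1 := by
        rw [Finset.card_insert_of_notMem hv₀τ, hτ]
      have hmυ : MDisj (insert v₀ τ) m := by
        intro s hs
        rcases Finset.mem_insert.1 hs with rfl | hs
        · exact hmv₀
        · exact hm s hs
      have h0 := congrArg (qcoeff (insert v₀ τ) m) (congrFun hdF ⟨insert v₀ τ, hυcard⟩)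
      rw [qcoeff_cechQD F ⟨insert v₀ τ, hυcard⟩ hmυ,
        show (0 : CechQTerm A l (i + 1 + 1)) ⟨insert v₀ τ, hυcard⟩ = 0 from rfl,
        qcoeff_zero hmυ] at h0
      rw [Finset.sum_insert hv₀τ, Finset.erase_insert hv₀τ] at h0
      rw [Finset.sum_congr rfl (fun γ hγ => by
        rw [Finset.erase_insert_of_ne (fun h => hv₀τ (h ▸ hγ) : v₀ ≠ γ)])] at h0
      have hsum : (∑ γ ∈ τ, ((-1 : ℤ) ^ cechPos (insert v₀ τ) γ) •
            tcoeff F (insert v₀ (τ.erase γ)) m)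
          = -(((-1 : ℤ) ^ cechPos (insert v₀ τ) v₀) • tcoeff F τ m) :=
        eq_neg_of_add_eq_zero_right h0
      calc ∑ γ ∈ τ, (((-1 : ℤ) ^ cechPos τ γ) *
              (-1) ^ cechPos (insert v₀ (τ.erase γ)) v₀) •
              tcoeff F (insert v₀ (τ.erase γ)) m
          = ∑ γ ∈ τ, (-(((-1 : ℤ) ^ cechPos (insert v₀ τ) v₀) *
              (-1) ^ cechPos (insert v₀ τ) γ)) • tcoeff F (insert v₀ (τ.erase γ)) m :=
            Finset.sum_congr rfl fun γ hγ => by rw [sign_homotopy hγ hv₀τ]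
        _ = -∑ γ ∈ τ, (((-1 : ℤ) ^ cechPos (insert v₀ τ) v₀) *
              (-1) ^ cechPos (insert v₀ τ) γ) • tcoeff F (insert v₀ (τ.erase γ)) m := by
            rw [← Finset.sum_neg_distrib]
            exact Finset.sum_congr rfl fun γ _ => neg_smul _ _
        _ = -(((-1 : ℤ) ^ cechPos (insert v₀ τ) v₀) •
              ∑ γ ∈ τ, ((-1 : ℤ) ^ cechPos (insert v₀ τ) γ) •
                tcoeff F (insert v₀ (τ.erase γ)) m) := by
            rw [Finset.smul_sum]
            exact congrArg Neg.neg (Finset.sum_congr rfl fun γ _ => (smul_smul _ _ _).symm)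
        _ = tcoeff F τ m := by
            rw [hsum, smul_neg, neg_neg, smul_smul, sgn_mul_self, one_smul]
        _ = qcoeff τ m (F ⟨τ, hτ⟩) := by rw [tcoeff_eq F hτ]
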